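/- Let k be a field of characteristic p > 0 and F, G ∈ k[X]^n. Let φ_F ∈ End(k[X]) be the algebra endomorphism sending xᵢ ↦ fᵢ, and let φ_F G = (φ_F(g₁),…,φ_F(gₙ)) ∈ k[X]^n. Then U(φ_F G) = (φ_F U(G)) · U(F), where φ_F U(G) is the matrix obtained by applying φ_F entrywise, and consequently Δ(φ_F G) = (φ_F Δ(G)) · Δ(F). -/

import Mathlib

open MvPolynomial

section Aux

variable {k : Type*} [Field k] {p n : ℕ}

/-- The subalgebra k[X^p]. -/
private noncomputable def Tsub (k : Type*) [Field k] (p n : ℕ) : Subalgebra k (MvPolynomial (Fin n) k) :=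
  Algebra.adjoin k (Set.range fun i : Fin n => (X i : MvPolynomial (Fin n) k) ^ p)

private lemma pow_mem_Tsub (hp : p.Prime) [CharP k p] (f : MvPolynomial (Fin n) k) :
    f ^ p ∈ Tsub k p n := by
  haveI := Fact.mk hp
  induction f using MvPolynomial.induction_on with
  | C a =>
      rw [← MvPolynomial.algebraMap_eq]
      exact pow_mem (Subalgebra.algebraMap_mem _ a) p
  | add f g hf hg => rw [add_pow_char]; exact add_mem hf hg
  | mul_X f i hf =>
      rw [mul_pow]
      exact mul_mem hf (Algebra.subset_adjoin ⟨i, rfl⟩)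

private lemma aeval_mem_Tsub (hp : p.Prime) [CharP k p] (F : Fin n → MvPolynomial (Fin n) k)
    {c : MvPolynomial (Fin n) k} (hc : c ∈ Tsub k p n) : aeval F c ∈ Tsub k p n := by
  induction hc using Algebra.adjoin_induction with
  | mem x hx =>
      obtain ⟨i, rfl⟩ := hx
      rw [map_pow, aeval_X]
      exact pow_mem_Tsub hp (F i)
  | algebraMap r => rw [AlgHom.commutes]; exact Subalgebra.algebraMap_mem _ r
  | add x y hx hy ihx ihy => rw [map_add]; exact add_mem ihx ihy
  | mul x y hx hy ihx ihy => rw [map_mul]; exact mul_mem ihx ihy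

private lemma support_dvd_of_mem_Tsub {c : MvPolynomial (Fin n) k} (hc : c ∈ Tsub k p n) :
    ∀ m ∈ c.support, ∀ i, p ∣ m i := by
  induction hc using Algebra.adjoin_induction with
  | mem x hx =>
      obtain ⟨i, rfl⟩ := hx
      classical
      intro m hm j
      dsimp only at hm
      rw [X_pow_eq_monomial, support_monomial, if_neg (one_ne_zero' k)] at hm
      simp only [Finset.mem_singleton] at hm
      subst hm
      rcases eq_or_ne j i with rfl | hji
      · simp [Finsupp.single_apply]
      · simp [Finsupp.single_apply, hji.symm]
  | algebraMap r =>
      intro m hm j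
      rw [MvPolynomial.algebraMap_eq, mem_support_iff] at hm
      have hm0 : m = 0 := by
        by_contra h0
        rw [coeff_C, if_neg (Ne.symm h0)] at hm
        exact hm rfl
      subst hm0; simp
  | add x y hx hy ihx ihy =>
      intro m hm j
      classical
      rcases Finset.mem_union.1 (support_add hm) with h | h
      · exact ihx m h j
      · exact ihy m h j
  | mul x y hx hy ihx ihy =>
      intro m hm j
      classical
      have := support_mul x y hm
      rw [Finset.mem_add] at this
      obtain ⟨a, ha, b, hb, rfl⟩ := this
      rw [Finsupp.add_apply]
      exact dvd_add (ihx a ha j) (ihy b hb j)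

/-- The exponent Finsupp associated to β ∈ [0,p-1]^n. -/
private noncomputable def bfin (β : Fin n → Fin p) : Fin n →₀ ℕ :=
  Finsupp.equivFunOnFinite.symm fun i => (β i : ℕ)

private lemma bfin_apply (β : Fin n → Fin p) (i : Fin n) : bfin β i = (β i : ℕ) := rfl

private lemma prod_X_pow (β : Fin n → Fin p) :
    (∏ i : Fin n, (X i : MvPolynomial (Fin n) k) ^ (β i : ℕ)) = monomial (bfin β) 1 := by
  rw [← prod_X_pow_eq_monomial]
  refine (Finset.prod_subset (Finset.subset_univ _) ?_).symm
  intro i _ hi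
  have : bfin β i = 0 := by
    simpa [Finsupp.mem_support_iff] using hi
  rw [bfin_apply] at this
  rw [this, pow_zero]

private lemma uniq_zero (hp : p.Prime) (c : (Fin n → Fin p) → MvPolynomial (Fin n) k)
    (hc : ∀ β, c β ∈ Tsub k p n)
    (h : ∑ β : Fin n → Fin p, c β * ∏ i : Fin n, X i ^ (β i : ℕ) = 0) :
    ∀ β, c β = 0 := by
  intro β0
  ext m
  rw [coeff_zero]
  by_cases h1 : ∀ i, p ∣ m i
  · have h2 := congrArg (coeff (m + bfin β0)) h
    rw [coeff_zero, coeff_sum] at h2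
    simp only [_root_.prod_X_pow, coeff_mul_monomial', mul_one] at h2
    rw [Finset.sum_eq_single β0] at h2
    · rw [if_pos le_add_self, add_tsub_cancel_right] at h2
      exact h2
    · intro β _ hβ
      rw [ite_eq_right_iff]
      intro hle
      by_contra hne
      have hmem : m + bfin β0 - bfin β ∈ (c β).support := mem_support_iff.2 hne
      obtain ⟨i, hi⟩ : ∃ i, β i ≠ β0 i := Function.ne_iff.1 hβ
      have hdvd := support_dvd_of_mem_Tsub (hc β) _ hmem i
      rw [Finsupp.tsub_apply, Finsupp.add_apply, bfin_apply, bfin_apply] at hdvd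
      have hle' : (β i : ℕ) ≤ m i + (β0 i : ℕ) := by
        have := hle i
        rwa [Finsupp.add_apply, bfin_apply, bfin_apply] at this
      -- derive β i ≡ β0 i [MOD p], contradiction
      have hmod : (β i : ℕ) ≡ (β0 i : ℕ) [MOD p] := by
        have e1 : (m i + (β0 i : ℕ) - (β i : ℕ)) + (β i : ℕ) = m i + (β0 i : ℕ) :=
          Nat.sub_add_cancel hle'
        have h3 : (m i + (β0 i : ℕ) - (β i : ℕ)) ≡ 0 [MOD p] :=
          (Nat.modEq_zero_iff_dvd).2 hdvd
        have h4 : m i ≡ 0 [MOD p] := (Nat.modEq_zero_iff_dvd).2 (h1 i)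
        calc (β i : ℕ) = 0 + (β i : ℕ) := (zero_add _).symm
          _ ≡ (m i + (β0 i : ℕ) - (β i : ℕ)) + (β i : ℕ) [MOD p] :=
              (Nat.ModEq.add_right _ h3.symm)
          _ = m i + (β0 i : ℕ) := e1
          _ ≡ 0 + (β0 i : ℕ) [MOD p] := Nat.ModEq.add_right _ h4
          _ = (β0 i : ℕ) := zero_add _
      have : (β i : ℕ) = (β0 i : ℕ) := by
        have := hmod
        rwa [Nat.ModEq, Nat.mod_eq_of_lt (β i).isLt, Nat.mod_eq_of_lt (β0 i).isLt] at this
      exact hi (Fin.ext this)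
    · intro hβ0
      exact absurd (Finset.mem_univ β0) hβ0
  · push_neg at h1
    obtain ⟨i, hi⟩ := h1
    by_contra hne
    exact hi (support_dvd_of_mem_Tsub (hc β0) m (mem_support_iff.2 hne) i)

private lemma uniq (hp : p.Prime) (c d : (Fin n → Fin p) → MvPolynomial (Fin n) k)
    (hc : ∀ β, c β ∈ Tsub k p n) (hd : ∀ β, d β ∈ Tsub k p n)
    (h : ∑ β : Fin n → Fin p, c β * ∏ i : Fin n, X i ^ (β i : ℕ) =
      ∑ β : Fin n → Fin p, d β * ∏ i : Fin n, X i ^ (β i : ℕ)) :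
    c = d := by
  have hz := uniq_zero hp (fun β => c β - d β) (fun β => sub_mem (hc β) (hd β))
    (by simp_rw [sub_mul]; rw [Finset.sum_sub_distrib, h, sub_self])
  funext β
  exact sub_eq_zero.1 (hz β)

end Aux

theorem stmt5 {k : Type*} [Field k] (p : ℕ) (hp : p.Prime) [CharP k p] (n : ℕ)
    (F G : Fin n → MvPolynomial (Fin n) k)
    (UF UG UFG : Matrix (Fin n → Fin p) (Fin n → Fin p) (MvPolynomial (Fin n) k))
    -- U(F): entries in k[X^p], with F^α = Σ_β U(F)_{αβ} X^β
    (hUFmem : ∀ α β, UF α β ∈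
      Algebra.adjoin k (Set.range fun i : Fin n => (X i : MvPolynomial (Fin n) k) ^ p))
    (hUF : ∀ α : Fin n → Fin p,
      ∏ i : Fin n, F i ^ (α i : ℕ) = ∑ β : Fin n → Fin p, UF α β * ∏ i : Fin n, X i ^ (β i : ℕ))
    -- U(G)
    (hUGmem : ∀ α β, UG α β ∈
      Algebra.adjoin k (Set.range fun i : Fin n => (X i : MvPolynomial (Fin n) k) ^ p))
    (hUG : ∀ α : Fin n → Fin p,
      ∏ i : Fin n, G i ^ (α i : ℕ) = ∑ β : Fin n → Fin p, UG α β * ∏ i : Fin n, X i ^ (β i : ℕ))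
    -- U(φ_F G), where φ_F G = (φ_F g₁, …, φ_F gₙ)
    (hUFGmem : ∀ α β, UFG α β ∈
      Algebra.adjoin k (Set.range fun i : Fin n => (X i : MvPolynomial (Fin n) k) ^ p))
    (hUFG : ∀ α : Fin n → Fin p,
      ∏ i : Fin n, (aeval F (G i)) ^ (α i : ℕ) =
        ∑ β : Fin n → Fin p, UFG α β * ∏ i : Fin n, X i ^ (β i : ℕ)) :
    UFG = UG.map (aeval F) * UF ∧ UFG.det = aeval F UG.det * UF.det := by
  have hmain : UFG = UG.map (aeval F) * UF := by
    refine Matrix.ext fun α β => ?_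
    have hrow : UFG α = fun β => ∑ γ : Fin n → Fin p, aeval F (UG α γ) * UF γ β := by
      apply uniq hp
      · exact hUFGmem α
      · intro β
        exact sum_mem fun γ _ => mul_mem (aeval_mem_Tsub hp F (hUGmem α γ)) (hUFmem γ β)
      · rw [← hUFG α]
        calc ∏ i : Fin n, (aeval F (G i)) ^ (α i : ℕ)
            = aeval F (∏ i : Fin n, G i ^ (α i : ℕ)) := by
              rw [map_prod]; simp [map_pow]
          _ = aeval F (∑ γ : Fin n → Fin p, UG α γ * ∏ i : Fin n, X i ^ (γ i : ℕ)) := by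
              rw [hUG α]
          _ = ∑ γ : Fin n → Fin p, aeval F (UG α γ) * ∏ i : Fin n, F i ^ (γ i : ℕ) := by
              rw [map_sum]; congr 1; funext γ
              rw [map_mul, map_prod]; simp [map_pow]
          _ = ∑ γ : Fin n → Fin p, aeval F (UG α γ) *
                ∑ β : Fin n → Fin p, UF γ β * ∏ i : Fin n, X i ^ (β i : ℕ) := by
              congr 1; funext γ; rw [hUF γ]
          _ = ∑ β : Fin n → Fin p, (∑ γ : Fin n → Fin p, aeval F (UG α γ) * UF γ β) *
                ∏ i : Fin n, X i ^ (β i : ℕ) := by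
              simp_rw [Finset.mul_sum, Finset.sum_mul, mul_assoc]
              rw [Finset.sum_comm]
    rw [Matrix.mul_apply]
    have := congrFun hrow β
    simp only [Matrix.map_apply] at *
    exact this
  refine ⟨hmain, ?_⟩
  rw [hmain, Matrix.det_mul]
  congr 1
  have := RingHom.map_det ((aeval F : MvPolynomial (Fin n) k →ₐ[k] MvPolynomial (Fin n) k) :
    MvPolynomial (Fin n) k →+* MvPolynomial (Fin n) k) UG
  simpa using this.symm
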